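/- arXiv:1702.05772 — 3 statements merged into one kernel-verified Lean document; each statement's English description precedes it below -/
import Mathlib

section
/- For all natural numbers n \ge 1 and all nonnegative integers \lambda, \prod_{i=1}^n (\lambda + i + 1) > \sum_{i=0}^n \frac{(n!)^2}{(i!)^2 (n-i)!} \lambda(\lambda-1)\cdots(\lambda - i + 1). -/
open Nat

lemma vandermonde_sym (n l : ℕ) :
    ∑ i ∈ Finset.range (n + 1), n.choose i * l.choose i = (n + l).choose n := by
  rw [Nat.add_choose_eq,
    Finset.Nat.sum_antidiagonal_eq_sum_range_succ (fun a b => n.choose a * l.choose b)]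
  rw [← Finset.sum_range_reflect]
  refine Finset.sum_congr rfl fun i hi => ?_
  simp only [Finset.mem_range] at hi
  have hi' : i ≤ n := Nat.lt_succ_iff.mp hi
  rw [show n + 1 - 1 - i = n - i from by omega, Nat.choose_symm hi']

lemma descFac_prod (n l : ℕ) :
    ((l + n).descFactorial n : ℚ) = ∏ i ∈ Finset.Icc 1 n, ((l : ℚ) + (i : ℚ)) := by
  induction n with
  | zero => simp
  | succ n ih =>
      rw [show l + (n + 1) = (l + n) + 1 from by ring, Nat.succ_descFactorial_succ,
        Finset.prod_Icc_succ_top (by omega : 1 ≤ n + 1), ← ih]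
      push_cast
      ring

/-- for `n ≥ 1` and any nonnegative integer `λ`,
`∏_{i=1}^n (λ+i+1) > ∑_{i=0}^n (n!)²/((i!)²(n-i)!) · λ(λ-1)⋯(λ-i+1)`. -/
theorem indicial_product_gt (n l : ℕ) (hn : 1 ≤ n) :
    (∑ i ∈ Finset.range (n + 1),
        ((n ! : ℚ) ^ 2 / ((i ! : ℚ) ^ 2 * ((n - i)! : ℚ))) * (l.descFactorial i : ℚ))
      < ∏ i ∈ Finset.Icc 1 n, ((l : ℚ) + (i : ℚ) + 1) := by
  have key : (∑ i ∈ Finset.range (n + 1),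
      ((n ! : ℚ) ^ 2 / ((i ! : ℚ) ^ 2 * ((n - i)! : ℚ))) * (l.descFactorial i : ℚ))
      = ∏ i ∈ Finset.Icc 1 n, ((l : ℚ) + (i : ℚ)) := by
    have step : ∀ i ∈ Finset.range (n + 1),
        ((n ! : ℚ) ^ 2 / ((i ! : ℚ) ^ 2 * ((n - i)! : ℚ))) * (l.descFactorial i : ℚ)
          = ((n ! * (n.choose i * l.choose i) : ℕ) : ℚ) := by
      intro i hi
      have hi' : i ≤ n := Nat.lt_succ_iff.mp (Finset.mem_range.mp hi)
      have h1 : n.choose i * i ! * (n - i)! = n ! := Nat.choose_mul_factorial_mul_factorial hi'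
      have h2 : l.descFactorial i = i ! * l.choose i :=
        Nat.descFactorial_eq_factorial_mul_choose l i
      have hfi : (i ! : ℚ) ≠ 0 := by exact_mod_cast (Nat.factorial_pos i).ne'
      have hfni : ((n - i)! : ℚ) ≠ 0 := by exact_mod_cast (Nat.factorial_pos (n - i)).ne'
      rw [h2]
      field_simp
      push_cast [← h1]
      ring
    rw [Finset.sum_congr rfl step, ← Nat.cast_sum, ← Finset.mul_sum, vandermonde_sym,
      ← Nat.descFactorial_eq_factorial_mul_choose, ← descFac_prod]
    norm_cast
    rw [Nat.add_comm]
  rw [key]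
  refine Finset.prod_lt_prod_of_nonempty (fun i hi => ?_) (fun i hi => by linarith)
    (Finset.nonempty_Icc.mpr hn)
  have : 1 ≤ i := (Finset.mem_Icc.mp hi).1
  have : (1 : ℚ) ≤ (i : ℚ) := by exact_mod_cast this
  positivity
end

section
/- Let n \ge 1, w \in \mathbb{C}, a \in \mathbb{C} with a \notin \mathbb{Q}_{<-1} (i.e. a is not a rational number strictly less than -1). Then the polynomial equation \prod_{i=1}^n(\lambda+i+1) + a\big(n! + \sum_{i=1}^n \frac{(n!)^2}{(i!)^2(n-i)!}\lambda(\lambda-1)\cdots(\lambda-i+1)\big) = 0 has no solutions \lambda in the nonnegative integers. -/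
open Nat Complex

lemma prodP_eq (l : ℕ) : ∀ n : ℕ,
    (l+1)! * ∏ i ∈ Finset.Icc 1 n, (l+i+1) = (l+n+1)! := by
  intro n
  induction n with
  | zero => simp
  | succ n ih =>
    rw [Finset.prod_Icc_succ_top (Nat.le_add_left 1 n), ← mul_assoc, ih]
    rw [show l + (n+1) + 1 = (l + n + 1) + 1 by omega, Nat.factorial_succ (l+n+1)]
    ring

lemma vand (n l : ℕ) :
    ∑ i ∈ Finset.range (n+1), n.choose i * l.choose i = (n+l).choose n := by
  rw [Nat.add_choose_eq, Finset.Nat.sum_antidiagonal_eq_sum_range_succ_mk]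
  rw [← Finset.sum_range_reflect]
  refine Finset.sum_congr rfl fun i hi => ?_
  have hi' : i ≤ n := Nat.lt_succ_iff.mp (Finset.mem_range.mp hi)
  simp only [Nat.add_sub_cancel]
  rw [Nat.choose_symm hi']

/-- for `n ≥ 1` and `a ∈ ℂ` not a rational number `< -1`, the indicial equation
`∏_{i=1}^n (λ+i+1) + a (n! + ∑_{i=1}^n (n!)²/((i!)²(n-i)!) λ(λ-1)⋯(λ-i+1)) = 0`
has no nonnegative integer solutions `λ`. -/
theorem indicial_no_nat_roots (n : ℕ) (hn : 1 ≤ n) (w a : ℂ)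
    (ha : ¬ ∃ q : ℚ, q < -1 ∧ a = (q : ℂ)) :
    ∀ l : ℕ,
      (∏ i ∈ Finset.Icc 1 n, ((l : ℂ) + (i : ℂ) + 1)) +
        a * ((n ! : ℂ) + ∑ i ∈ Finset.Icc 1 n,
          ((n ! : ℂ) ^ 2 / ((i ! : ℂ) ^ 2 * ((n - i)! : ℂ))) * (l.descFactorial i : ℂ)) ≠ 0 := by
  intro l heq
  apply ha
  -- Natural number values of the two parts
  set P : ℕ := ∏ i ∈ Finset.Icc 1 n, (l+i+1) with hP
  set Q : ℕ := n ! * (n+l).choose n with hQ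
  -- complex product equals cast of P
  have hPc : (∏ i ∈ Finset.Icc 1 n, ((l : ℂ) + (i : ℂ) + 1)) = (P : ℂ) := by
    rw [hP]; push_cast; rfl
  -- per-term identity
  have hterm : ∀ i ∈ Finset.Icc 1 n,
      ((n ! : ℂ) ^ 2 / ((i ! : ℂ) ^ 2 * ((n - i)! : ℂ))) * (l.descFactorial i : ℂ)
        = ((n ! * n.choose i * l.choose i : ℕ) : ℂ) := by
    intro i hi
    have hin : i ≤ n := (Finset.mem_Icc.mp hi).2
    have hkey : n.choose i * i ! * (n-i)! = n ! := Nat.choose_mul_factorial_mul_factorial hin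
    have hdesc : l.descFactorial i = i ! * l.choose i :=
      Nat.descFactorial_eq_factorial_mul_choose l i
    have h1 : ((i ! : ℂ)) ≠ 0 := Nat.cast_ne_zero.mpr (Nat.factorial_ne_zero i)
    have h2 : (((n-i)! : ℂ)) ≠ 0 := Nat.cast_ne_zero.mpr (Nat.factorial_ne_zero (n-i))
    rw [div_mul_eq_mul_div, div_eq_iff (mul_ne_zero (pow_ne_zero 2 h1) h2)]
    push_cast [hdesc, ← hkey]
    ring
  -- complex second factor equals cast of Q
  have hQc : (n ! : ℂ) + ∑ i ∈ Finset.Icc 1 n,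
      ((n ! : ℂ) ^ 2 / ((i ! : ℂ) ^ 2 * ((n - i)! : ℂ))) * (l.descFactorial i : ℂ) = (Q : ℂ) := by
    rw [Finset.sum_congr rfl hterm]
    have hnat : n ! + ∑ i ∈ Finset.Icc 1 n, n ! * n.choose i * l.choose i = Q := by
      have : ∑ i ∈ Finset.Icc 1 n, n ! * n.choose i * l.choose i
          = ∑ i ∈ Finset.range n, n ! * n.choose (1+i) * l.choose (1+i) := by
        rw [show Finset.Icc 1 n = Finset.Ico 1 (n+1) by rfl, Finset.sum_Ico_eq_sum_range]
        simp
      rw [this, hQ, ← vand n l, Finset.mul_sum]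
      rw [Finset.sum_range_succ' (fun i => n ! * (n.choose i * l.choose i)) n]
      simp [mul_assoc, add_comm, Nat.add_comm 1]
    rw [← hnat]; push_cast; ring
  rw [hPc, hQc] at heq
  -- Q > 0 and P > Q
  have hQpos : 0 < Q := by
    rw [hQ]
    exact Nat.mul_pos (Nat.factorial_pos n) (Nat.choose_pos (Nat.le_add_right n l))
  have hPQ : (l+1) * P = (l+n+1) * Q := by
    have h1 : (l+1)! * P = (l+n+1)! := prodP_eq l n
    have h2 : Q * l ! = (n+l)! := by
      have h := Nat.choose_mul_factorial_mul_factorial (Nat.le_add_right n l)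
      simp only [Nat.add_sub_cancel_left] at h
      rw [hQ, show n ! * (n+l).choose n * l ! = (n+l).choose n * n ! * l ! from by ring, h]
    have h3 : (l+n+1)! = (l+n+1) * (n+l)! := by
      rw [Nat.factorial_succ]; ring_nf
    have : ((l+1) * P) * l ! = ((l+n+1) * Q) * l ! := by
      calc ((l+1) * P) * l ! = (l+1)! * P := by rw [Nat.factorial_succ]; ring
        _ = (l+n+1)! := h1
        _ = (l+n+1) * ((n+l)!) := h3
        _ = (l+n+1) * (Q * l !) := by rw [h2]
        _ = ((l+n+1) * Q) * l ! := by ring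
    exact Nat.eq_of_mul_eq_mul_right (Nat.factorial_pos l) this
  have hPgtQ : Q < P := by
    have : (l+1) * Q < (l+1) * P := by
      rw [hPQ]
      exact (Nat.mul_lt_mul_right hQpos).mpr (by omega)
    exact Nat.lt_of_mul_lt_mul_left this
  -- conclude
  refine ⟨-(P : ℚ) / (Q : ℚ), ?_, ?_⟩
  · rw [div_lt_iff₀ (by exact_mod_cast hQpos)]
    push_cast
    nlinarith [hPgtQ, hQpos, (Nat.cast_lt (α := ℚ)).mpr hPgtQ]
  · have hQc0 : (Q : ℂ) ≠ 0 := Nat.cast_ne_zero.mpr hQpos.ne'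
    have : a = -(P : ℂ) / (Q : ℂ) := by
      field_simp
      linear_combination heq
    rw [this]
    push_cast
    ring
end

section
/- Let \phi(z) = \sum_{i=0}^n a_i(z)\bar z^i with a_i \in H^\infty(\mathbb{D}), \tilde\phi = \sum a_i z^{n-i}, and \widetilde{\partial\phi/\partial z} = \sum a_i' z^{n-i}. Then the differential operator D_\phi has leading expansion D_\phi = \tilde\phi D^n + \big((n+1)\tilde\phi' - \widetilde{\partial\phi/\partial z}\big) D^{n-1} + (terms of order at most n-2 in D). -/
open MeasureTheory Complex Metric

noncomputable section

/-- The open unit disc. -/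
def 𝔻 : Set ℂ := Metric.ball 0 1

/-- Normalized Lebesgue area measure on the unit disc. -/
def μD : MeasureTheory.Measure ℂ := (ENNReal.ofReal Real.pi)⁻¹ • (volume.restrict 𝔻)

/-- The Bergman space `A²(𝔻)`: the (closed) subspace of `L²(𝔻)` of functions having a
holomorphic representative on `𝔻`. -/
def bergman : Submodule ℂ (Lp ℂ 2 μD) :=
  (Submodule.span ℂ {f : Lp ℂ 2 μD | ∃ g : ℂ → ℂ, DifferentiableOn ℂ g 𝔻 ∧ ⇑f =ᵐ[μD] g}).topologicalClosure

instance : CompleteSpace bergman :=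
  (Submodule.isClosed_topologicalClosure _).completeSpace_coe

open Classical in
/-- The element of `L²(𝔻)` represented by `f` (junk value `0` if `f ∉ L²`). -/
def toLp' (f : ℂ → ℂ) : Lp ℂ 2 μD :=
  if h : MemLp f 2 μD then h.toLp f else 0

/-- The Toeplitz operator with symbol `φ` applied to `f`, viewed in `L²(𝔻)`:
the orthogonal (Bergman) projection of `φ · f` onto the Bergman space. -/
def T (φ f : ℂ → ℂ) : Lp ℂ 2 μD :=
  (Submodule.orthogonalProjectionOnto bergman (toLp' (fun z => φ z * f z)) : Lp ℂ 2 μD)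

/-- The operator `zD + c`, `g ↦ z g' + c g`. -/
def zD (c : ℂ) (g : ℂ → ℂ) : ℂ → ℂ := fun z => z * deriv g z + c * g z

/-- `zdProd s m = ∏_{k=s}^{s+m-1} (zD + k)` (composition of the commuting operators `zD+k`). -/
def zdProd (s : ℕ) : ℕ → (ℂ → ℂ) → (ℂ → ℂ)
  | 0, g => g
  | (m+1), g => zD (s + m) (zdProd s m g)

/-- The differential operator
`D_φ = ∏_{i=2}^{n+1}(zD+i) a₀ + ∑_{i=1}^n ∏_{k=i+2}^{n+1}(zD+k) Dⁱ aᵢ`. -/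
def Dop (n : ℕ) (a : ℕ → ℂ → ℂ) (f : ℂ → ℂ) : ℂ → ℂ := fun z =>
  zdProd 2 n (fun w => a 0 w * f w) z +
    ∑ i ∈ Finset.Icc 1 n, zdProd (i + 2) (n - i) (deriv^[i] (fun w => a i w * f w)) z

lemma isOpen_D' : IsOpen 𝔻 := Metric.isOpen_ball

lemma diffOn_iter {f : ℂ → ℂ} (hf : DifferentiableOn ℂ f 𝔻) :
    ∀ k : ℕ, DifferentiableOn ℂ (deriv^[k] f) 𝔻 := by
  intro k
  induction k with
  | zero => exact hf
  | succ k ih =>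
    rw [Function.iterate_succ_apply']
    exact ((ih.analyticOnNhd isOpen_D').deriv).differentiableOn

lemma diffAt_iter {f : ℂ → ℂ} (hf : DifferentiableOn ℂ f 𝔻) (k : ℕ) {z : ℂ} (hz : z ∈ 𝔻) :
    DifferentiableAt ℂ (deriv^[k] f) z :=
  (diffOn_iter hf k z hz).differentiableAt (isOpen_D'.mem_nhds hz)

lemma hasDerivAt_iter {f : ℂ → ℂ} (hf : DifferentiableOn ℂ f 𝔻) (k : ℕ) {z : ℂ} (hz : z ∈ 𝔻) :
    HasDerivAt (deriv^[k] f) (deriv^[k+1] f z) z := by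
  rw [Function.iterate_succ_apply']
  exact (diffAt_iter hf k hz).hasDerivAt

def Scoef (s : ℕ) : ℕ → ℕ → ℕ
  | 0, 0 => 1
  | 0, _+1 => 0
  | m+1, 0 => (s + m) * Scoef s m 0
  | m+1, j+1 => Scoef s m j + (j + 1 + s + m) * Scoef s m (j+1)

lemma Scoef_eq_zero (s : ℕ) : ∀ m j, m < j → Scoef s m j = 0 := by
  intro m
  induction m with
  | zero => intro j hj; match j, hj with | (j+1), _ => rfl
  | succ m ih =>
    intro j hj
    match j, hj with
    | (j+1), hj =>
      show Scoef s m j + (j + 1 + s + m) * Scoef s m (j+1) = 0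
      rw [ih j (by omega), ih (j+1) (by omega)]
      ring

lemma Scoef_self (s : ℕ) : ∀ m, Scoef s m m = 1 := by
  intro m
  induction m with
  | zero => rfl
  | succ m ih =>
    show Scoef s m m + (m + 1 + s + m) * Scoef s m (m+1) = 1
    rw [ih, Scoef_eq_zero s m (m+1) (by omega)]
    ring

lemma Scoef_sub (s : ℕ) : ∀ m, Scoef s (m+1) m = (m+1)*s + (m+1)*m := by
  intro m
  induction m with
  | zero => show (s + 0) * Scoef s 0 0 = _; rw [show Scoef s 0 0 = 1 from rfl]; ring
  | succ m ih =>
    show Scoef s (m+1) m + (m + 1 + s + (m+1)) * Scoef s (m+1) (m+1) = _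
    rw [ih, Scoef_self s (m+1)]
    ring

lemma z_mul_cast_pow (z : ℂ) : ∀ j : ℕ, z * ((j:ℂ) * z^(j-1)) = (j:ℂ) * z^j
  | 0 => by simp
  | (j+1) => by
      push_cast
      ring

lemma zdProd_expand (s : ℕ) (h : ℂ → ℂ) (hh : DifferentiableOn ℂ h 𝔻) :
    ∀ m, ∀ z ∈ 𝔻, zdProd s m h z
      = ∑ j ∈ Finset.range (m+1), (Scoef s m j : ℂ) * z ^ j * deriv^[j] h z := by
  intro m
  induction m with
  | zero => intro z hz; simp [zdProd, Scoef]
  | succ m ih =>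
    intro z hz
    have hstep : zdProd s (m+1) h z
        = z * deriv (zdProd s m h) z + ((s:ℂ) + m) * zdProd s m h z := rfl
    have hder : deriv (zdProd s m h) z
        = deriv (fun w => ∑ j ∈ Finset.range (m+1),
            (Scoef s m j : ℂ) * w ^ j * deriv^[j] h w) z := by
      apply Filter.EventuallyEq.deriv_eq
      exact Filter.eventuallyEq_of_mem (isOpen_D'.mem_nhds hz) (fun w hw => ih w hw)
    have hterm : ∀ j ∈ Finset.range (m+1),
        HasDerivAt (fun w => (Scoef s m j : ℂ) * w ^ j * deriv^[j] h w)
          ((Scoef s m j : ℂ) * ((j:ℂ) * z^(j-1)) * deriv^[j] h z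
            + (Scoef s m j : ℂ) * z ^ j * deriv^[j+1] h z) z := by
      intro j _
      exact ((hasDerivAt_pow j z).const_mul ((Scoef s m j : ℂ))).mul (hasDerivAt_iter hh j hz)
    have hderF : deriv (fun w => ∑ j ∈ Finset.range (m+1),
          (Scoef s m j : ℂ) * w ^ j * deriv^[j] h w) z
        = ∑ j ∈ Finset.range (m+1),
          ((Scoef s m j : ℂ) * ((j:ℂ) * z^(j-1)) * deriv^[j] h z
            + (Scoef s m j : ℂ) * z ^ j * deriv^[j+1] h z) := by
      rw [deriv_fun_sum (fun j hj => (hterm j hj).differentiableAt)]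
      exact Finset.sum_congr rfl (fun j hj => (hterm j hj).deriv)
    rw [hstep, hder, hderF, ih z hz]
    -- pure algebra now
    rw [Finset.mul_sum, Finset.mul_sum, ← Finset.sum_add_distrib]
    have lhs_eq : ∀ j ∈ Finset.range (m+1),
        z * ((Scoef s m j : ℂ) * ((j:ℂ) * z^(j-1)) * deriv^[j] h z
            + (Scoef s m j : ℂ) * z ^ j * deriv^[j+1] h z)
          + ((s:ℂ) + m) * ((Scoef s m j : ℂ) * z ^ j * deriv^[j] h z)
        = (((j:ℂ) + s + m) * (Scoef s m j : ℂ) * z^j * deriv^[j] h z)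
          + ((Scoef s m j : ℂ) * z^(j+1) * deriv^[j+1] h z) := by
      intro j _
      have hzp := z_mul_cast_pow z j
      calc z * ((Scoef s m j : ℂ) * ((j:ℂ) * z^(j-1)) * deriv^[j] h z
            + (Scoef s m j : ℂ) * z ^ j * deriv^[j+1] h z)
          + ((s:ℂ) + m) * ((Scoef s m j : ℂ) * z ^ j * deriv^[j] h z)
          = (z * ((j:ℂ) * z^(j-1))) * (Scoef s m j : ℂ) * deriv^[j] h z
            + (Scoef s m j : ℂ) * z^(j+1) * deriv^[j+1] h z
            + ((s:ℂ) + m) * ((Scoef s m j : ℂ) * z ^ j * deriv^[j] h z) := by ring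
        _ = ((j:ℂ) * z^j) * (Scoef s m j : ℂ) * deriv^[j] h z
            + (Scoef s m j : ℂ) * z^(j+1) * deriv^[j+1] h z
            + ((s:ℂ) + m) * ((Scoef s m j : ℂ) * z ^ j * deriv^[j] h z) := by rw [hzp]
        _ = _ := by ring
    rw [Finset.sum_congr rfl lhs_eq]
    rw [Finset.sum_range_succ' (fun j => (Scoef s (m+1) j : ℂ) * z ^ j * deriv^[j] h z) (m+1)]
    have hsucc : ∀ j ∈ Finset.range (m+1),
        (Scoef s (m+1) (j+1) : ℂ) * z ^ (j+1) * deriv^[j+1] h z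
        = ((Scoef s m j : ℂ) * z^(j+1) * deriv^[j+1] h z)
          + (((j:ℂ)+1 + s + m) * (Scoef s m (j+1) : ℂ) * z^(j+1) * deriv^[j+1] h z) := by
      intro j _
      rw [show Scoef s (m+1) (j+1) = Scoef s m j + (j + 1 + s + m) * Scoef s m (j+1) from rfl]
      push_cast
      ring
    rw [Finset.sum_congr rfl hsucc]
    have hzero : (Scoef s (m+1) 0 : ℂ) * z ^ 0 * deriv^[0] h z
        = (((0:ℂ) + s + m) * (Scoef s m 0 : ℂ) * z^0 * deriv^[0] h z) := by
      rw [show Scoef s (m+1) 0 = (s + m) * Scoef s m 0 from rfl]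
      push_cast
      ring
    rw [hzero]
    rw [Finset.sum_add_distrib, Finset.sum_add_distrib]
    rw [Finset.sum_range_succ'
      (fun j => ((j:ℂ) + s + m) * (Scoef s m j : ℂ) * z^j * deriv^[j] h z) m]
    have htop : ∑ j ∈ Finset.range (m+1),
        (((j:ℂ)+1 + s + m) * (Scoef s m (j+1) : ℂ) * z^(j+1) * deriv^[j+1] h z)
        = ∑ j ∈ Finset.range m,
        (((j:ℂ)+1 + s + m) * (Scoef s m (j+1) : ℂ) * z^(j+1) * deriv^[j+1] h z) := by
      rw [Finset.sum_range_succ, Scoef_eq_zero s m (m+1) (by omega)]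
      push_cast
      ring
    rw [htop]
    push_cast
    ring

lemma leibniz_D {f g : ℂ → ℂ} (hf : DifferentiableOn ℂ f 𝔻) (hg : DifferentiableOn ℂ g 𝔻) :
    ∀ m, ∀ z ∈ 𝔻, deriv^[m] (fun w => f w * g w) z
      = ∑ k ∈ Finset.range (m+1),
          ((m.choose k : ℕ) : ℂ) * deriv^[m+1-(k+1)] f z * deriv^[k] g z := by
  intro m
  induction m with
  | zero => intro z hz; simp
  | succ m ih =>
    intro z hz
    have hstep : deriv^[m+1] (fun w => f w * g w) z
        = deriv (deriv^[m] (fun w => f w * g w)) z := by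
      rw [Function.iterate_succ_apply']
    have hder : deriv (deriv^[m] (fun w => f w * g w)) z
        = deriv (fun w => ∑ k ∈ Finset.range (m+1),
            ((m.choose k : ℕ) : ℂ) * deriv^[m+1-(k+1)] f w * deriv^[k] g w) z := by
      apply Filter.EventuallyEq.deriv_eq
      exact Filter.eventuallyEq_of_mem (isOpen_D'.mem_nhds hz) (fun w hw => ih w hw)
    have hterm : ∀ k ∈ Finset.range (m+1),
        HasDerivAt (fun w => ((m.choose k : ℕ) : ℂ) * deriv^[m+1-(k+1)] f w * deriv^[k] g w)
          ((((m.choose k : ℕ) : ℂ) * deriv^[m+1-(k+1)+1] f z) * deriv^[k] g z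
            + (((m.choose k : ℕ) : ℂ) * deriv^[m+1-(k+1)] f z) * deriv^[k+1] g z) z := by
      intro k _
      exact ((hasDerivAt_iter hf (m+1-(k+1)) hz).const_mul (((m.choose k : ℕ) : ℂ))).mul
        (hasDerivAt_iter hg k hz)
    have hderF : deriv (fun w => ∑ k ∈ Finset.range (m+1),
          ((m.choose k : ℕ) : ℂ) * deriv^[m+1-(k+1)] f w * deriv^[k] g w) z
        = ∑ k ∈ Finset.range (m+1),
          ((((m.choose k : ℕ) : ℂ) * deriv^[m+1-(k+1)+1] f z) * deriv^[k] g z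
            + (((m.choose k : ℕ) : ℂ) * deriv^[m+1-(k+1)] f z) * deriv^[k+1] g z) := by
      rw [deriv_fun_sum (fun k hk => (hterm k hk).differentiableAt)]
      exact Finset.sum_congr rfl (fun k hk => (hterm k hk).deriv)
    rw [hstep, hder, hderF]
    -- algebra
    have hAB : ∀ k ∈ Finset.range (m+1),
        ((((m.choose k : ℕ) : ℂ) * deriv^[m+1-(k+1)+1] f z) * deriv^[k] g z
          + (((m.choose k : ℕ) : ℂ) * deriv^[m+1-(k+1)] f z) * deriv^[k+1] g z)
        = (((m.choose k : ℕ) : ℂ) * deriv^[m+1+1-(k+1)] f z * deriv^[k] g z)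
          + (((m.choose k : ℕ) : ℂ) * deriv^[m+1-(k+1)] f z * deriv^[k+1] g z) := by
      intro k hk
      rw [Finset.mem_range] at hk
      rw [show m+1-(k+1)+1 = m+1+1-(k+1) by omega]
    rw [Finset.sum_congr rfl hAB, Finset.sum_add_distrib]
    rw [Finset.sum_range_succ'
      (fun k => ((m+1).choose k : ℂ) * deriv^[m+1+1-(k+1)] f z * deriv^[k] g z) (m+1)]
    have hsucc : ∀ k ∈ Finset.range (m+1),
        (((m+1).choose (k+1) : ℂ) * deriv^[m+1+1-(k+1+1)] f z * deriv^[k+1] g z)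
        = ((m.choose k : ℂ) * deriv^[m+1-(k+1)] f z * deriv^[k+1] g z)
          + ((m.choose (k+1) : ℂ) * deriv^[m+1+1-(k+1+1)] f z * deriv^[k+1] g z) := by
      intro k _
      rw [Nat.choose_succ_succ' m k]
      rw [show m+1+1-(k+1+1) = m+1-(k+1) by omega]
      push_cast
      ring
    rw [Finset.sum_congr rfl hsucc, Finset.sum_add_distrib]
    rw [Finset.sum_range_succ'
      (fun k => ((m.choose k : ℕ) : ℂ) * deriv^[m+1+1-(k+1)] f z * deriv^[k] g z) m]
    have htop : ∑ k ∈ Finset.range (m+1),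
        ((m.choose (k+1) : ℂ) * deriv^[m+1+1-(k+1+1)] f z * deriv^[k+1] g z)
        = ∑ k ∈ Finset.range m,
        ((m.choose (k+1) : ℂ) * deriv^[m+1+1-(k+1+1)] f z * deriv^[k+1] g z) := by
      rw [Finset.sum_range_succ, Nat.choose_eq_zero_of_lt (by omega : m < m+1)]
      push_cast
      ring
    rw [htop]
    simp only [Nat.choose_zero_right]
    push_cast
    ring

def Ecoef (n : ℕ) (a : ℕ → ℂ → ℂ) (k : ℕ) (z : ℂ) : ℂ :=
  ∑ i ∈ Finset.range (n+1), ∑ j ∈ Finset.range (n-i+1),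
    (Scoef (i+2) (n-i) j : ℂ) * z^j * (((i+j).choose k : ℕ) : ℂ) * deriv^[i+j-k] (a i) z

lemma Ecoef_diffOn (n : ℕ) (a : ℕ → ℂ → ℂ) (ha : ∀ i ≤ n, DifferentiableOn ℂ (a i) 𝔻)
    (k : ℕ) : DifferentiableOn ℂ (Ecoef n a k) 𝔻 := by
  apply DifferentiableOn.fun_sum
  intro i hi
  apply DifferentiableOn.fun_sum
  intro j _
  rw [Finset.mem_range] at hi
  exact (((differentiableOn_const _).mul (differentiable_pow j).differentiableOn).mul
    (differentiableOn_const _)).mul (diffOn_iter (ha i (by omega)) _)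

lemma Dop_expand (n : ℕ) (a : ℕ → ℂ → ℂ) (ha : ∀ i ≤ n, DifferentiableOn ℂ (a i) 𝔻)
    (g : ℂ → ℂ) (hg : DifferentiableOn ℂ g 𝔻) : ∀ z ∈ 𝔻,
    Dop n a g z = ∑ k ∈ Finset.range (n+1), Ecoef n a k z * deriv^[k] g z := by
  intro z hz
  have hA : ∀ i ≤ n, DifferentiableOn ℂ (fun w => a i w * g w) 𝔻 :=
    fun i hi => (ha i hi).mul hg
  have step1 : Dop n a g z = ∑ i ∈ Finset.range (n+1),
      zdProd (i+2) (n-i) (deriv^[i] (fun w => a i w * g w)) z := by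
    rw [show Finset.range (n+1) = insert 0 (Finset.Icc 1 n) by
      ext x; simp only [Finset.mem_range, Finset.mem_insert, Finset.mem_Icc]; omega]
    rw [Finset.sum_insert (by simp)]
    rfl
  calc Dop n a g z
      = ∑ i ∈ Finset.range (n+1),
          zdProd (i+2) (n-i) (deriv^[i] (fun w => a i w * g w)) z := step1
    _ = ∑ i ∈ Finset.range (n+1), ∑ j ∈ Finset.range (n-i+1), ∑ k ∈ Finset.range (n+1),
          ((Scoef (i+2) (n-i) j : ℂ) * z^j * (((i+j).choose k : ℕ) : ℂ)
            * deriv^[i+j-k] (a i) z) * deriv^[k] g z := by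
        refine Finset.sum_congr rfl (fun i hi => ?_)
        rw [Finset.mem_range] at hi
        have hi' : i ≤ n := by omega
        rw [zdProd_expand (i+2) _ (diffOn_iter (hA i hi') i) (n-i) z hz]
        refine Finset.sum_congr rfl (fun j hj => ?_)
        rw [Finset.mem_range] at hj
        have hij : deriv^[j] (deriv^[i] (fun w => a i w * g w)) z
            = deriv^[i+j] (fun w => a i w * g w) z := by
          rw [← Function.iterate_add_apply, Nat.add_comm j i]
        rw [hij, leibniz_D (ha i hi') hg (i+j) z hz]
        simp only [Nat.succ_sub_succ]
        rw [Finset.mul_sum]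
        refine Eq.trans ?_ (Finset.sum_subset
          (Finset.range_subset_range.mpr (show i+j+1 ≤ n+1 by omega)) (fun k _ hk' => ?_))
        · exact Finset.sum_congr rfl (fun k _ => by ring)
        · rw [Finset.mem_range] at hk'
          rw [Nat.choose_eq_zero_of_lt (by omega : i+j < k)]
          simp
    _ = ∑ k ∈ Finset.range (n+1), ∑ i ∈ Finset.range (n+1), ∑ j ∈ Finset.range (n-i+1),
          ((Scoef (i+2) (n-i) j : ℂ) * z^j * (((i+j).choose k : ℕ) : ℂ)
            * deriv^[i+j-k] (a i) z) * deriv^[k] g z := by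
        rw [Finset.sum_congr rfl (fun (i : ℕ) (_ : i ∈ Finset.range (n+1)) =>
          Finset.sum_comm)]
        exact Finset.sum_comm
    _ = ∑ k ∈ Finset.range (n+1), Ecoef n a k z * deriv^[k] g z := by
        refine Finset.sum_congr rfl (fun k _ => ?_)
        rw [Ecoef, Finset.sum_mul]
        exact Finset.sum_congr rfl (fun i _ => by rw [Finset.sum_mul])

lemma Ecoef_top (n : ℕ) (a : ℕ → ℂ → ℂ) (z : ℂ) :
    Ecoef n a n z = ∑ i ∈ Finset.range (n+1), a i z * z^(n-i) := by
  rw [Ecoef]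
  refine Finset.sum_congr rfl (fun i hi => ?_)
  rw [Finset.mem_range] at hi
  have hi' : i ≤ n := by omega
  rw [Finset.sum_eq_single (n-i)
    (fun j hj hne => ?_) (fun h => absurd (Finset.self_mem_range_succ _) h)]
  · rw [show i + (n - i) = n by omega, Scoef_self, Nat.choose_self, Nat.sub_self]
    simp only [Function.iterate_zero, id_eq, Nat.cast_one]
    ring
  · rw [Finset.mem_range] at hj
    rw [Nat.choose_eq_zero_of_lt (show i + j < n by omega)]
    simp

lemma sum_range_two_top (F : ℕ → ℂ) (q : ℕ) (h0 : ∀ j, j < q → F j = 0) :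
    ∑ j ∈ Finset.range (q+2), F j = F (q+1) + F q := by
  rw [Finset.sum_range_succ, Finset.sum_range_succ,
    Finset.sum_eq_zero (fun j hj => h0 j (Finset.mem_range.mp hj))]
  ring

lemma Ecoef_sub (m : ℕ) (a : ℕ → ℂ → ℂ) (ha : ∀ i ≤ m+1, DifferentiableOn ℂ (a i) 𝔻)
    {z : ℂ} (hz : z ∈ 𝔻) :
    Ecoef (m+1) a m z
      = ((m:ℂ)+2) * deriv (fun u => ∑ i ∈ Finset.range (m+2), a i u * u^(m+1-i)) z
        - ∑ i ∈ Finset.range (m+2), deriv (a i) z * z^(m+1-i) := by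
  have hderφ : deriv (fun u => ∑ i ∈ Finset.range (m+2), a i u * u^(m+1-i)) z
      = ∑ i ∈ Finset.range (m+2),
          (deriv (a i) z * z^(m+1-i) + a i z * (((m+1-i:ℕ):ℂ) * z^(m+1-i-1))) := by
    have hterm : ∀ i ∈ Finset.range (m+2),
        HasDerivAt (fun u => a i u * u^(m+1-i))
          (deriv (a i) z * z^(m+1-i) + a i z * (((m+1-i:ℕ):ℂ) * z^(m+1-i-1))) z := by
      intro i hi
      rw [Finset.mem_range] at hi
      have hd : DifferentiableAt ℂ (a i) z :=
        ((ha i (by omega)) z hz).differentiableAt (isOpen_D'.mem_nhds hz)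
      exact hd.hasDerivAt.mul (hasDerivAt_pow (m+1-i) z)
    rw [deriv_fun_sum (fun i hi => (hterm i hi).differentiableAt)]
    exact Finset.sum_congr rfl (fun i hi => (hterm i hi).deriv)
  rw [hderφ, Finset.mul_sum, ← Finset.sum_sub_distrib, Ecoef]
  refine Finset.sum_congr rfl (fun i hi => ?_)
  rw [Finset.mem_range] at hi
  by_cases him : i = m+1
  · subst him
    rw [show m+1 - (m+1) = 0 by omega, Finset.sum_range_one]
    rw [show (m+1) + 0 = m+1 from rfl, Nat.choose_succ_self_right,
      show m+1-m = 1 by omega, show Scoef (m+1+2) 0 0 = 1 from rfl]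
    simp only [Function.iterate_one, pow_zero, Nat.cast_zero, Nat.cast_add, Nat.cast_one]
    ring
  · have hi' : i ≤ m := by omega
    have hni : m+1-i = (m-i)+1 := by omega
    rw [hni]
    have hzero : ∀ j, j < m - i →
        (Scoef (i+2) ((m-i)+1) j : ℂ) * z ^ j * (((i+j).choose m : ℕ) : ℂ)
          * deriv^[i+j-m] (a i) z = 0 := by
      intro j hj
      rw [Nat.choose_eq_zero_of_lt (show i + j < m by omega)]
      simp
    rw [sum_range_two_top _ (m-i) hzero]
    · have hiq : i + (m-i) = m := by omega
      have hiq1 : i + ((m-i)+1) = m+1 := by omega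
      rw [hiq1, Scoef_self, Nat.choose_succ_self_right, show m+1-m = 1 by omega]
      rw [hiq, Nat.choose_self, Nat.sub_self, Scoef_sub]
      simp only [Function.iterate_one, Function.iterate_zero, id_eq, Nat.cast_one,
        Nat.add_sub_cancel]
      have hiqC : (i:ℂ) + (m-i:ℕ) = m := by
        have := congrArg (Nat.cast : ℕ → ℂ) hiq
        push_cast at this
        exact this
      push_cast
      linear_combination (((m-i:ℕ):ℂ)+1) * a i z * z^(m-i) * hiqC


/-- `D_φ = φ̃ Dⁿ + ((n+1)φ̃' - (∂φ/∂z)^~) D^{n-1} + (terms of order ≤ n-2)`,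
where `φ̃ = ∑ aᵢ z^{n-i}` and `(∂φ/∂z)^~ = ∑ aᵢ' z^{n-i}`. -/
theorem Dop_leading_coeffs (n : ℕ) (hn : 1 ≤ n) (a : ℕ → ℂ → ℂ)
    (ha : ∀ i ≤ n, DifferentiableOn ℂ (a i) 𝔻)
    (hab : ∀ i ≤ n, ∃ C, ∀ z ∈ 𝔻, ‖a i z‖ ≤ C) :
    ∃ c : ℕ → ℂ → ℂ, (∀ i, DifferentiableOn ℂ (c i) 𝔻) ∧
      ∀ g : ℂ → ℂ, DifferentiableOn ℂ g 𝔻 → ∀ z ∈ 𝔻,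
        Dop n a g z =
          (∑ i ∈ Finset.range (n + 1), a i z * z ^ (n - i)) * iteratedDeriv n g z +
            (((n : ℂ) + 1) * deriv (fun u => ∑ i ∈ Finset.range (n + 1), a i u * u ^ (n - i)) z -
              ∑ i ∈ Finset.range (n + 1), deriv (a i) z * z ^ (n - i)) *
              iteratedDeriv (n - 1) g z +
            ∑ i ∈ Finset.range (n - 1), c i z * iteratedDeriv i g z := by
  obtain ⟨m, rfl⟩ : ∃ m, n = m + 1 := ⟨n - 1, by omega⟩
  refine ⟨fun k => Ecoef (m+1) a k, fun k => Ecoef_diffOn (m+1) a ha k, ?_⟩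
  intro g hg z hz
  rw [Dop_expand (m+1) a ha g hg z hz]
  simp only [iteratedDeriv_eq_iterate, Nat.add_sub_cancel]
  rw [Finset.sum_range_succ, Finset.sum_range_succ]
  rw [Ecoef_top (m+1) a z, Ecoef_sub m a ha hz]
  rw [show m + 1 + 1 = m + 2 from rfl]
  push_cast
  ring
end
end
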